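/- There exists a two-track, normal form, reversible Turing machine UtoB with alphabet {#, 1} × {#, 0, 1} with the following properties: on input 1^n;# (the number n written in unary as a string of n 1's on the first track, second track blank), UtoB behaves properly and halts with output 1^n;n (first track unchanged, and n written in little-endian binary on the second track); furthermore UtoB runs for O(n² log n) steps and uses n + 1 tape cells. -/

import Mathlib

open scoped Classical

noncomputable section

/-- Head movement directions of a generalised Turing machine: Left, Right, or None. -/
inductive Dir3 : Type
  | L
  | R
  | N
deriving DecidableEq

instance : Fintype Dir3 :=
  ⟨{Dir3.L, Dir3.R, Dir3.N}, fun x => by cases x <;> decide⟩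

/-- Displacement of the head. -/
def Dir3.move : Dir3 → ℤ
  | .L => -1
  | .R => 1
  | .N => 0

/-- A generalised deterministic Turing machine over tape alphabet `Γ` (with blank
symbol `blank`) and state set `Q`, with initial state `q0`, final state `qf`, and
total transition function `δ : Q × Γ → Γ × Q × {L, R, N}`. -/
structure GTM (Γ Q : Type) where
  blank : Γ
  q0 : Q
  qf : Q
  δ : Q → Γ → Γ × Q × Dir3

/-- A configuration: internal state, head position, and tape contents. -/
structure GCfg (Γ Q : Type) where
  state : Q
  head : ℤ
  tape : ℤ → Γ

/-- The global step function of a generalised TM. -/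
def GTM.step {Γ Q : Type} (M : GTM Γ Q) (c : GCfg Γ Q) : GCfg Γ Q :=
  let t := M.δ c.state (c.tape c.head)
  ⟨t.2.1, c.head + t.2.2.move, Function.update c.tape c.head t.1⟩

/-- A TM is reversible if every configuration has at most one predecessor,
i.e. the global step function is injective. -/
def GTM.Reversible {Γ Q : Type} (M : GTM Γ Q) : Prop :=
  Function.Injective M.step

/-- Normal form: `δ(q_f, σ) = (σ, q₀, N)` for every `σ`. -/
def GTM.NormalForm {Γ Q : Type} (M : GTM Γ Q) : Prop :=
  ∀ σ : Γ, M.δ M.qf σ = (σ, M.q0, Dir3.N)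

/-- The configuration after `t` steps, started in state `q0` with head in the starting
cell `0` on initial tape `tape0`. -/
def GTM.run {Γ Q : Type} (M : GTM Γ Q) (tape0 : ℤ → Γ) (t : ℕ) : GCfg Γ Q :=
  M.step^[t] ⟨M.q0, 0, tape0⟩

/-- `M`, started on `tape0`, behaves properly and halts at time exactly `t` with final
tape `tapeF`: at time `t` it is in the final state for the first time, with the head
back in the starting cell and tape contents `tapeF`, and the head never moved to the
left of the starting cell. -/
def GTM.ProperRun {Γ Q : Type} (M : GTM Γ Q) (tape0 : ℤ → Γ) (t : ℕ)
    (tapeF : ℤ → Γ) : Prop :=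
  (M.run tape0 t).state = M.qf ∧
  (M.run tape0 t).head = 0 ∧
  (M.run tape0 t).tape = tapeF ∧
  (∀ t' < t, (M.run tape0 t').state ≠ M.qf) ∧
  (∀ t' ≤ t, 0 ≤ (M.run tape0 t').head)

/-- `M` uses at most `s` tape cells on this run: the head stays within `[0, s)`. -/
def GTM.SpaceBound {Γ Q : Type} (M : GTM Γ Q) (tape0 : ℤ → Γ) (t : ℕ) (s : ℕ) : Prop :=
  ∀ t' ≤ t, (M.run tape0 t').head < (s : ℤ)

/-- The tape holding the little-endian binary expansion of `n` (no leading zeros,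
zero represented by the empty string), over the alphabet `{#, 0, 1}` modelled as
`Option Bool` with `none = #`. -/
def binTape (n : ℕ) : ℤ → Option Bool := fun i =>
  if 0 ≤ i ∧ i < ((Nat.digits 2 n).length : ℤ)
  then some ((Nat.digits 2 n).getD i.toNat 0 == 1)
  else none

/-- The number of binary digits `|n|` of `n`. -/
def binLen (n : ℕ) : ℕ := (Nat.digits 2 n).length

/-- The unary tape holding `n` written as a string of `n` 1's (alphabet `{#, 1}`
modelled as `Option Unit`, with `none = #`). -/
def unaryTape (n : ℕ) : ℤ → Option Unit := fun i =>
  if 0 ≤ i ∧ i < (n : ℤ) then some () else none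

set_option maxRecDepth 100000

namespace UtoB

inductive St : Type
  | q0 | e1 | l1 | c1 | E | Lw | C | B | Rw | K | K1 | X | F | qf
deriving DecidableEq

instance : Fintype St :=
  ⟨{.q0, .e1, .l1, .c1, .E, .Lw, .C, .B, .Rw, .K, .K1, .X, .F, .qf},
    fun x => by cases x <;> decide⟩

abbrev Gam : Type := Option Unit × Option Bool

def dM : St → Gam → Gam × St × Dir3 := fun q g => match q, g with
  | .q0, (none, none) => ((none, none), .qf, .N)
  | .q0, (none, some false) => ((none, none), .e1, .R)
  | .q0, (none, some true) => ((none, some false), .e1, .R)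
  | .q0, (some _, none) => ((none, some true), .e1, .R)
  | .q0, (some _, some false) => ((some (), none), .e1, .R)
  | .q0, (some _, some true) => ((some (), some false), .e1, .R)
  | .e1, (none, none) => ((none, none), .K1, .L)
  | .e1, (none, some false) => ((some (), some true), .e1, .R)
  | .e1, (none, some true) => ((none, some false), .l1, .L)
  | .e1, (some _, none) => ((none, none), .l1, .L)
  | .e1, (some _, some false) => ((none, some true), .l1, .L)
  | .e1, (some _, some true) => ((some (), none), .l1, .L)
  | .l1, (none, none) => ((some (), some false), .l1, .L)
  | .l1, (none, some false) => ((some (), some true), .l1, .L)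
  | .l1, (none, some true) => ((none, some false), .c1, .R)
  | .l1, (some _, none) => ((none, none), .c1, .R)
  | .l1, (some _, some false) => ((none, some true), .c1, .R)
  | .l1, (some _, some true) => ((some (), none), .c1, .R)
  | .c1, (none, none) => ((some (), some true), .E, .R)
  | .c1, (none, some false) => ((some (), some false), .c1, .R)
  | .c1, (none, some true) => ((some (), some true), .c1, .R)
  | .c1, (some _, none) => ((none, none), .E, .R)
  | .c1, (some _, some false) => ((none, some false), .E, .R)
  | .c1, (some _, some true) => ((none, some true), .E, .R)
  | .E, (none, none) => ((none, none), .K, .L)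
  | .E, (none, some false) => ((some (), none), .E, .R)
  | .E, (none, some true) => ((none, some false), .Lw, .L)
  | .E, (some _, none) => ((none, none), .Lw, .L)
  | .E, (some _, some false) => ((none, some true), .Lw, .L)
  | .E, (some _, some true) => ((some (), none), .Lw, .L)
  | .Lw, (none, none) => ((none, none), .C, .R)
  | .Lw, (none, some false) => ((none, some true), .Rw, .R)
  | .Lw, (none, some true) => ((none, some false), .C, .R)
  | .Lw, (some _, none) => ((none, some true), .C, .R)
  | .Lw, (some _, some false) => ((some (), some false), .Lw, .L)
  | .Lw, (some _, some true) => ((some (), some true), .Lw, .L)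
  | .C, (none, none) => ((some (), none), .C, .R)
  | .C, (none, some false) => ((some (), some true), .C, .R)
  | .C, (none, some true) => ((none, none), .B, .L)
  | .C, (some _, none) => ((none, some false), .B, .L)
  | .C, (some _, some false) => ((some (), some true), .B, .L)
  | .C, (some _, some true) => ((some (), some false), .C, .R)
  | .B, (none, none) => ((none, some true), .B, .L)
  | .B, (none, some false) => ((none, some false), .Rw, .R)
  | .B, (none, some true) => ((some (), none), .B, .L)
  | .B, (some _, none) => ((none, none), .Rw, .R)
  | .B, (some _, some false) => ((some (), some false), .B, .L)
  | .B, (some _, some true) => ((some (), none), .Rw, .R)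
  | .Rw, (none, none) => ((some (), some false), .E, .R)
  | .Rw, (none, some false) => ((none, some false), .K, .L)
  | .Rw, (none, some true) => ((none, some true), .K, .L)
  | .Rw, (some _, none) => ((some (), some false), .K, .L)
  | .Rw, (some _, some false) => ((some (), some false), .Rw, .R)
  | .Rw, (some _, some true) => ((some (), some true), .Rw, .R)
  | .K, (none, none) => ((some (), some true), .K, .L)
  | .K, (none, some false) => ((none, some false), .K1, .L)
  | .K, (none, some true) => ((none, some true), .K1, .L)
  | .K, (some _, none) => ((some (), none), .K1, .L)
  | .K, (some _, some false) => ((some (), none), .K, .L)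
  | .K, (some _, some true) => ((some (), some true), .X, .R)
  | .K1, (none, none) => ((some (), some false), .K1, .L)
  | .K1, (none, some false) => ((some (), some true), .K1, .L)
  | .K1, (none, some true) => ((none, some true), .X, .R)
  | .K1, (some _, none) => ((none, none), .X, .R)
  | .K1, (some _, some false) => ((none, some false), .X, .R)
  | .K1, (some _, some true) => ((some (), some false), .X, .R)
  | .X, (none, none) => ((none, none), .F, .L)
  | .X, (none, some false) => ((none, some false), .F, .L)
  | .X, (none, some true) => ((none, some true), .F, .L)
  | .X, (some _, none) => ((some (), none), .X, .R)
  | .X, (some _, some false) => ((none, some false), .qf, .N)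
  | .X, (some _, some true) => ((none, some true), .qf, .N)
  | .F, (none, none) => ((some (), none), .qf, .N)
  | .F, (none, some false) => ((some (), some false), .qf, .N)
  | .F, (none, some true) => ((some (), some true), .qf, .N)
  | .F, (some _, none) => ((some (), none), .F, .L)
  | .F, (some _, some false) => ((some (), some false), .F, .L)
  | .F, (some _, some true) => ((some (), some true), .F, .L)
  | .qf, (none, none) => ((none, none), .q0, .N)
  | .qf, (none, some false) => ((none, some false), .q0, .N)
  | .qf, (none, some true) => ((none, some true), .q0, .N)
  | .qf, (some _, none) => ((some (), none), .q0, .N)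
  | .qf, (some _, some false) => ((some (), some false), .q0, .N)
  | .qf, (some _, some true) => ((some (), some true), .q0, .N)

def dirOf : St → Dir3
  | .q0 => .N | .qf => .N | .e1 => .R | .l1 => .L | .c1 => .R | .E => .R
  | .Lw => .L | .C => .R | .B => .L | .Rw => .R | .K => .L | .K1 => .L
  | .X => .R | .F => .L

lemma dM_dir : ∀ q g, (dM q g).2.2 = dirOf (dM q g).2.1 := by decide

lemma dM_inj : Function.Injective
    (fun p : St × Gam => ((dM p.1 p.2).1, (dM p.1 p.2).2.1)) := by decide

def M : GTM Gam St := ⟨(none, none), .q0, .qf, dM⟩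

lemma M_rev : M.Reversible := by
  rintro ⟨q1, h1, t1⟩ ⟨q2, h2, t2⟩ h
  have hMd : M.δ = dM := rfl
  simp only [GTM.step, hMd, GCfg.mk.injEq] at h
  obtain ⟨hs, hh, ht⟩ := h
  have hd : (dM q1 (t1 h1)).2.2 = (dM q2 (t2 h2)).2.2 := by
    rw [dM_dir, dM_dir, hs]
  have hmv : (dM q1 (t1 h1)).2.2.move = (dM q2 (t2 h2)).2.2.move := by rw [hd]
  have hh12 : h1 = h2 := by
    rw [hmv] at hh
    omega
  subst hh12
  have hat : (dM q1 (t1 h1)).1 = (dM q2 (t2 h1)).1 := by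
    have := congrFun ht h1
    simpa using this
  have hkey : ((q1, t1 h1) : St × Gam) = (q2, t2 h1) := dM_inj (by
    simp only [Prod.mk.injEq]
    exact ⟨hat, hs⟩)
  obtain ⟨hq, hsym⟩ := Prod.mk.injEq .. ▸ hkey
  have ht12 : t1 = t2 := by
    funext i
    by_cases hi : i = h1
    · subst hi; exact hsym
    · have := congrFun ht i
      simpa [Function.update_apply, hi] using this
  simp [hq, ht12]

lemma M_nf : M.NormalForm := by
  intro σ
  show dM .qf σ = (σ, .q0, Dir3.N)
  rcases σ with ⟨a, b⟩
  rcases a with _ | ⟨⟩ <;> rcases b with _ | b <;> first | rfl | (cases b <;> rfl)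

/-! ### Run segments -/

def Pc (n : ℕ) (c : GCfg Gam St) : Prop :=
  c.state ≠ .qf ∧ 0 ≤ c.head ∧ c.head ≤ (n : ℤ)

def Seg (n k : ℕ) (c c' : GCfg Gam St) : Prop :=
  M.step^[k] c = c' ∧ ∀ i < k, Pc n (M.step^[i] c)

lemma Seg.trans {n k k' : ℕ} {c c' c'' : GCfg Gam St}
    (h : Seg n k c c') (h' : Seg n k' c' c'') : Seg n (k + k') c c'' := by
  constructor
  · rw [add_comm, Function.iterate_add_apply, h.1, h'.1]
  · intro i hi
    by_cases hik : i < k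
    · exact h.2 i hik
    · have : i = (i - k) + k := by omega
      rw [this, Function.iterate_add_apply, h.1]
      exact h'.2 (i - k) (by omega)

lemma Seg.cast {n k k' : ℕ} {c c1 c2 : GCfg Gam St} (hk : k = k') (hc : c1 = c2)
    (h : Seg n k c c1) : Seg n k' c c2 := hk ▸ hc ▸ h

lemma seg1 {n : ℕ} {q : St} {p : ℤ} {t : ℤ → Gam} {c' : GCfg Gam St}
    (h : M.step ⟨q, p, t⟩ = c')
    (h1 : q ≠ .qf) (h2 : 0 ≤ p) (h3 : p ≤ (n : ℤ)) :
    Seg n 1 ⟨q, p, t⟩ c' := by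
  refine ⟨by simpa using h, ?_⟩
  intro i hi
  have : i = 0 := by omega
  subst this
  exact ⟨h1, h2, h3⟩

lemma cfg_congr (q : St) {p p' : ℤ} {t t' : ℤ → Gam} (hp : p = p')
    (ht : ∀ i, t i = t' i) : (⟨q, p, t⟩ : GCfg Gam St) = ⟨q, p', t'⟩ := by
  subst hp
  rw [funext ht]

lemma stepE {q : St} {p : ℤ} {t : ℤ → Gam} {γ w : Gam} {q' : St} {d : Dir3}
    (ht : t p = γ) (hδ : dM q γ = (w, q', d)) :
    M.step ⟨q, p, t⟩ = ⟨q', p + d.move, Function.update t p w⟩ := by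
  have hMd : M.δ = dM := rfl
  simp only [GTM.step, hMd]
  rw [ht, hδ]

/-! ### Walks and sweeps -/

lemma walk_right {n : ℕ} {q : St} (hq : q ≠ .qf) (m : ℕ) {t : ℤ → Gam} {a : ℤ}
    (h0 : 0 ≤ a) (hub : a + (m : ℤ) ≤ (n : ℤ))
    (hs : ∀ i : ℤ, a ≤ i → i < a + (m : ℤ) → dM q (t i) = (t i, q, .R)) :
    Seg n m ⟨q, a, t⟩ ⟨q, a + (m : ℤ), t⟩ := by
  induction m generalizing a with
  | zero =>
    refine ⟨?_, by omega⟩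
    simp
  | succ m ih =>
    have hstep : M.step ⟨q, a, t⟩ = ⟨q, a + 1, t⟩ := by
      rw [stepE rfl (hs a le_rfl (by push_cast; omega))]
      exact cfg_congr q rfl (fun i => by
        by_cases hi : i = a <;> simp [Function.update_apply, hi])
    have ihh := ih (a := a + 1) (by omega) (by push_cast at hub ⊢; omega)
      (fun i hi1 hi2 => hs i (by omega) (by push_cast at hi2 ⊢; omega))
    refine Seg.cast (by omega) (cfg_congr q (by push_cast; ring) (fun _ => rfl))
      ((seg1 hstep hq h0 (by push_cast at hub; omega)).trans ihh)

lemma walk_left {n : ℕ} {q : St} (hq : q ≠ .qf) (m : ℕ) {t : ℤ → Gam} {b : ℤ}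
    (h0 : 0 ≤ b - (m : ℤ)) (hub : b ≤ (n : ℤ))
    (hs : ∀ i : ℤ, b - (m : ℤ) < i → i ≤ b → dM q (t i) = (t i, q, .L)) :
    Seg n m ⟨q, b, t⟩ ⟨q, b - (m : ℤ), t⟩ := by
  induction m generalizing b with
  | zero =>
    refine ⟨?_, by omega⟩
    simp
  | succ m ih =>
    have hstep : M.step ⟨q, b, t⟩ = ⟨q, b - 1, t⟩ := by
      rw [stepE rfl (hs b (by push_cast; omega) le_rfl)]
      refine cfg_congr q (by simp [Dir3.move]; ring) (fun i => by
        by_cases hi : i = b <;> simp [Function.update_apply, hi])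
    have ihh := ih (b := b - 1) (by push_cast at h0 ⊢; omega) (by omega)
      (fun i hi1 hi2 => hs i (by push_cast at hi1 ⊢; omega) (by omega))
    refine Seg.cast (by omega) (cfg_congr q (by push_cast; ring) (fun _ => rfl))
      ((seg1 hstep hq (by push_cast at h0; omega) hub).trans ihh)

lemma sweep_right {n : ℕ} {q : St} (hq : q ≠ .qf) {gi go : Gam}
    (hδ : dM q gi = (go, q, .R)) (m : ℕ) {t : ℤ → Gam} {a : ℤ}
    (h0 : 0 ≤ a) (hub : a + (m : ℤ) ≤ (n : ℤ))
    (hr : ∀ i : ℤ, a ≤ i → i < a + (m : ℤ) → t i = gi) :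
    Seg n m ⟨q, a, t⟩
      ⟨q, a + (m : ℤ), fun i => if a ≤ i ∧ i < a + (m : ℤ) then go else t i⟩ := by
  induction m generalizing a t with
  | zero =>
    refine ⟨?_, by omega⟩
    simp only [Function.iterate_zero_apply]
    exact cfg_congr q (by push_cast; ring) (fun i => by
      rw [if_neg (by push_cast; omega)])
  | succ m ih =>
    have hstep : M.step ⟨q, a, t⟩ = ⟨q, a + 1, Function.update t a go⟩ := by
      rw [stepE (hr a le_rfl (by push_cast; omega)) hδ]
      rfl
    have ihh := ih (a := a + 1) (t := Function.update t a go) (by omega)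
      (by push_cast at hub ⊢; omega)
      (fun i hi1 hi2 => by
        rw [Function.update_apply, if_neg (by omega)]
        exact hr i (by omega) (by push_cast at hi2 ⊢; omega))
    refine Seg.cast (by omega) (cfg_congr q (by push_cast; ring) (fun i => ?_))
      ((seg1 hstep hq h0 (by push_cast at hub; omega)).trans ihh)
    push_cast
    by_cases h1 : a + 1 ≤ i ∧ i < a + 1 + (m : ℤ)
    · rw [if_pos h1, if_pos (by omega)]
    · rw [if_neg h1, Function.update_apply]
      by_cases h2 : i = a
      · rw [if_pos h2, if_pos (by omega)]
      · rw [if_neg h2, if_neg (by omega)]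

lemma sweep_left {n : ℕ} {q : St} (hq : q ≠ .qf) {gi go : Gam}
    (hδ : dM q gi = (go, q, .L)) (m : ℕ) {t : ℤ → Gam} {b : ℤ}
    (h0 : 0 ≤ b - (m : ℤ)) (hub : b ≤ (n : ℤ))
    (hr : ∀ i : ℤ, b - (m : ℤ) < i → i ≤ b → t i = gi) :
    Seg n m ⟨q, b, t⟩
      ⟨q, b - (m : ℤ), fun i => if b - (m : ℤ) < i ∧ i ≤ b then go else t i⟩ := by
  induction m generalizing b t with
  | zero =>
    refine ⟨?_, by omega⟩
    simp only [Function.iterate_zero_apply]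
    exact cfg_congr q (by push_cast; ring) (fun i => by
      rw [if_neg (by push_cast; omega)])
  | succ m ih =>
    have hstep : M.step ⟨q, b, t⟩ = ⟨q, b - 1, Function.update t b go⟩ := by
      rw [stepE (hr b (by push_cast; omega) le_rfl) hδ]
      exact cfg_congr q (by simp [Dir3.move]; ring) (fun _ => rfl)
    have ihh := ih (b := b - 1) (t := Function.update t b go)
      (by push_cast at h0 ⊢; omega) (by omega)
      (fun i hi1 hi2 => by
        rw [Function.update_apply, if_neg (by omega)]
        exact hr i (by push_cast at hi1 ⊢; omega) (by omega))
    refine Seg.cast (by omega) (cfg_congr q (by push_cast; ring) (fun i => ?_))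
      ((seg1 hstep hq (by push_cast at h0; omega) hub).trans ihh)
    push_cast
    by_cases h1 : b - 1 - (m : ℤ) < i ∧ i ≤ b - 1
    · rw [if_pos h1, if_pos (by omega)]
    · rw [if_neg h1, Function.update_apply]
      by_cases h2 : i = b
      · rw [if_pos h2, if_pos (by omega)]
      · rw [if_neg h2, if_neg (by omega)]

end UtoB
namespace UtoB

/-! ### Arithmetic helpers -/

lemma two_pow_big {j : ℕ} (h : 2 ≤ j) : j + 2 ≤ 2 ^ j := by
  induction j with
  | zero => omega
  | succ j ih =>
    rcases Nat.lt_or_ge j 2 with hj | hj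
    · interval_cases j
      · omega
      · norm_num
    · have := ih (by omega)
      rw [pow_succ]
      omega

lemma getD_digits (n : ℕ) : ∀ i, (Nat.digits 2 n).getD i 0 = n / 2 ^ i % 2 := by
  induction n using Nat.strong_induction_on with
  | _ n ih =>
    intro i
    rcases Nat.eq_zero_or_pos n with hn | hn
    · subst hn; simp
    · rw [Nat.digits_def' (by norm_num) hn]
      cases i with
      | zero => simp
      | succ i =>
        have := ih (n / 2) (Nat.div_lt_self hn (by norm_num)) i
        simpa [Nat.div_div_eq_div_mul, pow_succ, mul_comm] using this

lemma digits_beq (n i : ℕ) :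
    ((Nat.digits 2 n).getD i 0 == 1) = n.testBit i := by
  rw [getD_digits, Nat.testBit_eq_decide_div_mod_eq]
  by_cases h : n / 2 ^ i % 2 = 1 <;> simp [h]

lemma testBit_self_false (j : ℕ) : j.testBit j = false :=
  Nat.testBit_lt_two_pow (Nat.lt_two_pow_self (n := j))

/-- Trailing-ones structure of the increment `j → j + 1`, for `j ≥ 2`. -/
lemma trailing (j : ℕ) (h2 : 2 ≤ j) :
    ∃ c : ℕ, c < j ∧ (∀ i, i < c → j.testBit i = true) ∧ j.testBit c = false ∧
      (∀ i, i < c → (j + 1).testBit i = false) ∧ (j + 1).testBit c = true ∧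
      (∀ i, c < i → (j + 1).testBit i = j.testBit i) := by
  have hex : ∃ i, j.testBit i = false :=
    ⟨j, Nat.testBit_lt_two_pow (Nat.lt_two_pow_self (n := j))⟩
  set c := Nat.find hex with hcdef
  have f2 : j.testBit c = false := Nat.find_spec hex
  have f1 : ∀ i, i < c → j.testBit i = true := by
    intro i hi
    have := Nat.find_min hex hi
    simpa using this
  have h2c : 0 < 2 ^ c := pow_pos (by norm_num) c
  have hmod : j % 2 ^ c = 2 ^ c - 1 := by
    have aux : ∀ k, k ≤ c → j % 2 ^ k = 2 ^ k - 1 := by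
      intro k
      induction k with
      | zero => intro _; simp [Nat.mod_one]
      | succ k ihk =>
        intro hk
        have hbit : j / 2 ^ k % 2 = 1 := by
          have hb := f1 k (by omega)
          rw [Nat.testBit_eq_decide_div_mod_eq] at hb
          simpa using hb
        have hmm : j % (2 ^ k * 2) = j % 2 ^ k + 2 ^ k * (j / 2 ^ k % 2) :=
          Nat.mod_mul
        have hkk := ihk (by omega)
        have h2k : 0 < 2 ^ k := pow_pos (by norm_num) k
        rw [pow_succ]
        rw [hbit, Nat.mul_one] at hmm
        omega
    exact aux c le_rfl
  have hDm := Nat.div_add_mod j (2 ^ c)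
  set D := j / 2 ^ c with hDdef
  have hDeven : D % 2 = 0 := by
    rw [Nat.testBit_eq_decide_div_mod_eq] at f2
    simp only [decide_eq_false_iff_not] at f2
    omega
  have hsucc : j + 1 = 2 ^ c * (D + 1) := by
    rw [Nat.mul_add, Nat.mul_one]
    omega
  have hclt : c < j := by
    by_contra hcj
    push_neg at hcj
    have h1 : 2 ^ c ≤ j + 1 := by
      calc 2 ^ c = 2 ^ c * 1 := (Nat.mul_one _).symm
        _ ≤ 2 ^ c * (D + 1) := Nat.mul_le_mul_left _ (Nat.succ_le_succ (Nat.zero_le _))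
        _ = j + 1 := hsucc.symm
    have hbig : j + 2 ≤ 2 ^ j := two_pow_big h2
    have : (2:ℕ) ^ j ≤ 2 ^ c := Nat.pow_le_pow_right (by norm_num) hcj
    omega
  refine ⟨c, hclt, f1, f2, ?_, ?_, ?_⟩
  · intro i hi
    rw [Nat.testBit_eq_decide_div_mod_eq]
    have hfac : j + 1 = 2 ^ i * (2 ^ (c - i) * (D + 1)) := by
      rw [hsucc, ← Nat.mul_assoc, ← pow_add]
      congr 2
      omega
    rw [hfac, Nat.mul_div_cancel_left _ (pow_pos (by norm_num) i)]
    have hdvd : (2:ℕ) ∣ 2 ^ (c - i) := dvd_pow_self 2 (by omega)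
    rcases hdvd with ⟨e, he⟩
    rw [he, Nat.mul_assoc, Nat.mul_mod_right]
    simp
  · rw [Nat.testBit_eq_decide_div_mod_eq, hsucc, Nat.mul_div_cancel_left _ h2c]
    simp
    omega
  · intro i hi
    rw [Nat.testBit_eq_decide_div_mod_eq, Nat.testBit_eq_decide_div_mod_eq]
    have hnd : ¬ (2 ^ i ∣ (j + 1)) := by
      rintro ⟨e, he⟩
      have hpow : (2:ℕ) ^ i = 2 ^ c * (2 * 2 ^ (i - c - 1)) := by
        have hi' : c + 1 + (i - c - 1) = i := by omega
        calc (2:ℕ) ^ i = 2 ^ (c + 1 + (i - c - 1)) := by rw [hi']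
          _ = 2 ^ c * (2 * 2 ^ (i - c - 1)) := by rw [pow_add, pow_add]; ring
      have hkey : 2 ^ c * (D + 1) = 2 ^ c * (2 * (2 ^ (i - c - 1) * e)) := by
        rw [← hsucc, he, hpow]
        ring
      have := Nat.eq_of_mul_eq_mul_left h2c hkey
      omega
    rw [Nat.succ_div, if_neg hnd]
    simp

/-! ### Tapes -/

def inT (n : ℕ) : ℤ → Gam := fun i => (unaryTape n i, none)

def outT (n : ℕ) : ℤ → Gam := fun i => (unaryTape n i, binTape n i)

/-- tape during the counting phase: beacon hole at 0, counter value `j`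
    (with zero padding) on cells `0..j-1`. -/
def tp (n j : ℕ) : ℤ → Gam := fun i =>
  (if 1 ≤ i ∧ i < (n : ℤ) then some () else none,
   if 0 ≤ i ∧ i < (j : ℤ) then some (j.testBit i.toNat) else none)

lemma unaryTape_pos {n : ℕ} {i : ℤ} (h1 : 0 ≤ i) (h2 : i < (n:ℤ)) :
    unaryTape n i = some () := by
  rw [unaryTape, if_pos ⟨h1, h2⟩]

lemma unaryTape_neg {n : ℕ} {i : ℤ} (h : i < 0 ∨ (n:ℤ) ≤ i) :
    unaryTape n i = none := by
  rw [unaryTape, if_neg (by omega)]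

end UtoB
namespace UtoB

lemma tp_mark {n j : ℕ} {i : ℤ} (h1 : 1 ≤ i) (h2 : i < (n:ℤ)) (h3 : (j:ℤ) ≤ i) :
    tp n j i = (some (), none) := by
  simp only [tp]
  rw [if_pos ⟨h1, h2⟩, if_neg (by omega)]

lemma tp_dig {n j : ℕ} {i : ℤ} (h1 : 1 ≤ i) (h2 : i < (j:ℤ)) (h3 : (j:ℤ) ≤ (n:ℤ)) :
    tp n j i = (some (), some (j.testBit i.toNat)) := by
  simp only [tp]
  rw [if_pos ⟨h1, by omega⟩, if_pos ⟨by omega, h2⟩]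

lemma tp_zero {n j : ℕ} (hj : 0 < j) : tp n j 0 = (none, some (j.testBit 0)) := by
  simp only [tp]
  rw [if_neg (by omega), if_pos ⟨le_rfl, by omega⟩]
  rfl

lemma tp_blank {n j : ℕ} {i : ℤ} (h : i < 0 ∨ ((n:ℤ) ≤ i ∧ (j:ℤ) ≤ i)) :
    tp n j i = (none, none) := by
  simp only [tp]
  rw [if_neg (by omega), if_neg (by omega)]

/-- mid-round tape: hole at `j`, cells `< x` already showing the bits of `j+1`,
cells `≥ x` still showing the bits of `j`. -/
def midT (n j : ℕ) (x i : ℤ) : Gam :=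
  if i = (j:ℤ) then (none, none)
  else if i < x then tp n (j+1) i else tp n j i

lemma midT_at {n j : ℕ} {x i : ℤ} (h : i = (j:ℤ)) : midT n j x i = (none, none) := by
  rw [midT, if_pos h]

lemma midT_lo {n j : ℕ} {x i : ℤ} (hne : i ≠ (j:ℤ)) (h : i < x) :
    midT n j x i = tp n (j+1) i := by
  rw [midT, if_neg hne, if_pos h]

lemma midT_hi {n j : ℕ} {x i : ℤ} (hne : i ≠ (j:ℤ)) (h : x ≤ i) :
    midT n j x i = tp n j i := by
  rw [midT, if_neg hne, if_neg (by omega)]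

lemma segStep {n : ℕ} {q : St} {p : ℤ} {t : ℤ → Gam} {γ w : Gam} {q' : St}
    {d : Dir3} {p' : ℤ}
    (ht : t p = γ) (hδ : dM q γ = (w, q', d)) (hq : q ≠ .qf)
    (hp0 : 0 ≤ p) (hpn : p ≤ (n:ℤ)) (hp' : p + d.move = p') :
    Seg n 1 ⟨q, p, t⟩ ⟨q', p', Function.update t p w⟩ := by
  refine seg1 ?_ hq hp0 hpn
  rw [stepE ht hδ, hp']

/-- One full counting round `j → j+1`, for `2 ≤ j`, `j + 1 ≤ n`. -/
lemma round {n : ℕ} (j : ℕ) (h2 : 2 ≤ j) (hjn : j + 1 ≤ n) :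
    ∃ s, s ≤ 4*j + 3 ∧
      Seg n s ⟨.E, (j:ℤ), tp n j⟩ ⟨.E, (j:ℤ)+1, tp n (j+1)⟩ := by
  obtain ⟨c, hclt, f1, f2, g3, g4, g5⟩ := trailing j h2
  have hJ1 : (1:ℤ) ≤ (j:ℤ) := by omega
  have hJn : (j:ℤ) < (n:ℤ) := by omega
  -- final tape identification
  have hfin : ∀ x : ℤ, (c:ℤ) < x → ∀ i,
      Function.update (midT n j x) ((j:ℤ)) (some (), some false) i = tp n (j+1) i := by
    intro x hx1 i
    rw [Function.update_apply]
    by_cases hij : i = (j:ℤ)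
    · rw [if_pos hij, hij, tp_dig hJ1 (by push_cast; omega) (by push_cast; omega)]
      have hT : ((j:ℤ)).toNat = j := by omega
      rw [hT, g5 j hclt, testBit_self_false]
    · rw [if_neg hij]
      by_cases hlt : i < x
      · rw [midT_lo hij hlt]
      · by_cases hin : 1 ≤ i ∧ i < (j:ℤ)
        · rw [midT_hi hij (by omega),
            tp_dig (by omega) (by omega) (by omega),
            tp_dig (by omega) (by push_cast; omega) (by push_cast; omega),
            g5 i.toNat (by omega)]
        · have hout : i < 0 ∨ ((j:ℤ) < i) := by omega
          rcases hout with hout | hout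
          · exact absurd (by omega : i < x) hlt
          · rw [midT_hi hij (by omega)]
            by_cases hiN : i < (n:ℤ)
            · rw [tp_mark (by omega) hiN (by omega),
                tp_mark (by omega) hiN (by push_cast; omega)]
            · rw [tp_blank (by omega), tp_blank (by push_cast; omega)]
  -- step 1 : examine cell j, erase marker
  have S1 : Seg n 1 ⟨.E, (j:ℤ), tp n j⟩ ⟨.Lw, (j:ℤ)-1, midT n j 0⟩ := by
    refine Seg.cast rfl (cfg_congr _ rfl ?_)
      (segStep (tp_mark hJ1 hJn le_rfl) rfl (by decide) (by omega) (by omega)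
        (by simp only [Dir3.move]; try omega))
    intro i
    rw [Function.update_apply]
    by_cases hij : i = (j:ℤ)
    · rw [if_pos hij, midT_at hij]
    · rw [if_neg hij]
      by_cases hneg : i < 0
      · rw [midT_lo hij hneg, tp_blank (Or.inl hneg), tp_blank (Or.inl hneg)]
      · rw [midT_hi hij (by omega)]
  -- step 2 : walk left to the beacon
  have S2 : Seg n (j-1) ⟨.Lw, (j:ℤ)-1, midT n j 0⟩ ⟨.Lw, 0, midT n j 0⟩ := by
    refine Seg.cast rfl (cfg_congr _ (by omega) (fun _ => rfl))
      (walk_left (by decide) (j-1) (by omega) (by omega) ?_)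
    intro i hi1 hi2
    rw [midT_hi (by omega) (by omega), tp_dig (by omega) (by omega) (by omega)]
    cases j.testBit i.toNat <;> rfl
  -- value at the beacon
  have hbv : midT n j 0 0 = (none, some (j.testBit 0)) := by
    rw [midT_hi (by omega) le_rfl, tp_zero (by omega)]
  rcases Nat.eq_zero_or_pos c with hc0 | hc1
  · -- no carry: bit 0 of j is 0
    subst hc0
    have hb0 : j.testBit 0 = false := f2
    -- step 3 : flip bit 0 to 1
    have S3 : Seg n 1 ⟨.Lw, 0, midT n j 0⟩ ⟨.Rw, 1, midT n j 1⟩ := by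
      refine Seg.cast rfl (cfg_congr _ rfl ?_)
        (segStep (by rw [hbv, hb0]) rfl (by decide) (by omega) (by omega)
          (by simp only [Dir3.move]; try omega))
      intro i
      rw [Function.update_apply]
      by_cases hi0 : i = 0
      · rw [if_pos hi0, hi0, midT_lo (by omega) (by omega), tp_zero (by omega),
          g4]
      · rw [if_neg hi0]
        by_cases hij : i = (j:ℤ)
        · rw [midT_at hij, midT_at hij]
        · by_cases hneg : i < 0
          · rw [midT_lo hij hneg, midT_lo hij (by omega)]
          · rw [midT_hi hij (by omega), midT_hi hij (by omega)]
    -- step 4 : walk right to the marker hole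
    have S4 : Seg n (j-1) ⟨.Rw, 1, midT n j 1⟩ ⟨.Rw, (j:ℤ), midT n j 1⟩ := by
      refine Seg.cast rfl (cfg_congr _ (by omega) (fun _ => rfl))
        (walk_right (by decide) (j-1) (by omega) (by omega) ?_)
      intro i hi1 hi2
      rw [midT_hi (by omega) (by omega), tp_dig (by omega) (by omega) (by omega)]
      cases j.testBit i.toNat <;> rfl
    -- step 5 : restore marker, back to examine state
    have S5 : Seg n 1 ⟨.Rw, (j:ℤ), midT n j 1⟩ ⟨.E, (j:ℤ)+1, tp n (j+1)⟩ := by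
      refine Seg.cast rfl (cfg_congr _ rfl (hfin 1 (by omega)))
        (segStep (midT_at rfl) rfl (by decide) (by omega) (by omega)
          (by simp only [Dir3.move]; try omega))
    have SS := (((S1.trans S2).trans S3).trans S4).trans S5
    exact ⟨2*j + 1, by omega, Seg.cast (by omega) rfl SS⟩
  · -- carry chain of length c ≥ 1
    have hb0 : j.testBit 0 = true := f1 0 hc1
    have hCn : (c:ℤ) < (n:ℤ) := by omega
    -- step 3 : flip bit 0 to 0, start carrying
    have S3 : Seg n 1 ⟨.Lw, 0, midT n j 0⟩ ⟨.C, 1, midT n j 1⟩ := by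
      refine Seg.cast rfl (cfg_congr _ rfl ?_)
        (segStep (by rw [hbv, hb0]) rfl (by decide) (by omega) (by omega)
          (by simp only [Dir3.move]; try omega))
      intro i
      rw [Function.update_apply]
      by_cases hi0 : i = 0
      · rw [if_pos hi0, hi0, midT_lo (by omega) (by omega), tp_zero (by omega),
          g3 0 hc1]
      · rw [if_neg hi0]
        by_cases hij : i = (j:ℤ)
        · rw [midT_at hij, midT_at hij]
        · by_cases hneg : i < 0
          · rw [midT_lo hij hneg, midT_lo hij (by omega)]
          · rw [midT_hi hij (by omega), midT_hi hij (by omega)]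
    -- step 4 : sweep right flipping the carry chain 1 → 0
    have S4 : Seg n (c-1) ⟨.C, 1, midT n j 1⟩ ⟨.C, (c:ℤ), midT n j c⟩ := by
      have hsw := sweep_right (n := n) (q := .C)
        (gi := (some (), some true)) (go := (some (), some false))
        (by decide) rfl (c-1) (t := midT n j 1) (a := 1)
        (by omega) (by omega) ?_
      · refine Seg.cast rfl (cfg_congr _ (by omega) ?_) hsw
        intro i
        by_cases hcc : 1 ≤ i ∧ i < 1 + ((c-1:ℕ):ℤ)
        · rw [if_pos hcc, midT_lo (by omega) (by omega),
            tp_dig (by omega) (by push_cast; omega) (by push_cast; omega),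
            g3 i.toNat (by omega)]
        · rw [if_neg hcc]
          by_cases hij : i = (j:ℤ)
          · rw [midT_at hij, midT_at hij]
          · by_cases hlt : i < 1
            · rw [midT_lo hij hlt, midT_lo hij (by omega)]
            · rw [midT_hi hij (by omega), midT_hi hij (by omega)]
      · intro i hi1 hi2
        rw [midT_hi (by omega) (by omega),
          tp_dig (by omega) (by omega) (by omega),
          f1 i.toNat (by omega)]
    -- step 5 : carry ends on the 0 bit at cell c, which becomes 1
    have S5 : Seg n 1 ⟨.C, (c:ℤ), midT n j c⟩ ⟨.B, (c:ℤ)-1, midT n j (c+1)⟩ := by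
      have hrd : midT n j c (c:ℤ) = (some (), some false) := by
        rw [midT_hi (by omega) le_rfl, tp_dig (by omega) (by omega) (by omega),
          show ((c:ℤ)).toNat = c from by omega, f2]
      refine Seg.cast rfl (cfg_congr _ rfl ?_)
        (segStep hrd rfl (by decide) (by omega) (by omega) (by simp only [Dir3.move]; try omega))
      intro i
      rw [Function.update_apply]
      by_cases hic : i = (c:ℤ)
      · rw [if_pos hic, hic, midT_lo (by omega) (by omega),
          tp_dig (by omega) (by push_cast; omega) (by push_cast; omega),
          show ((c:ℤ)).toNat = c from by omega, g4]
      · rw [if_neg hic]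
        by_cases hij : i = (j:ℤ)
        · rw [midT_at hij, midT_at hij]
        · by_cases hlt : i < (c:ℤ)
          · rw [midT_lo hij hlt, midT_lo hij (by omega)]
          · rw [midT_hi hij (by omega), midT_hi hij (by omega)]
    -- step 6 : walk back left over the fresh zeros to the beacon
    have S6 : Seg n (c-1) ⟨.B, (c:ℤ)-1, midT n j (c+1)⟩ ⟨.B, 0, midT n j (c+1)⟩ := by
      refine Seg.cast rfl (cfg_congr _ (by omega) (fun _ => rfl))
        (walk_left (by decide) (c-1) (by omega) (by omega) ?_)
      intro i hi1 hi2
      rw [midT_lo (by omega) (by omega),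
        tp_dig (by omega) (by push_cast; omega) (by push_cast; omega),
        g3 i.toNat (by omega)]
      rfl
    -- step 7 : bounce off the beacon to the right
    have S7 : Seg n 1 ⟨.B, 0, midT n j (c+1)⟩ ⟨.Rw, 1, midT n j (c+1)⟩ := by
      have hrd : midT n j (c+1) 0 = (none, some false) := by
        rw [midT_lo (by omega) (by omega), tp_zero (by omega), g3 0 hc1]
      refine Seg.cast rfl (cfg_congr _ rfl ?_)
        (segStep hrd rfl (by decide) (by omega) (by omega) (by simp only [Dir3.move]; try omega))
      intro i
      rw [Function.update_apply]
      by_cases hi0 : i = 0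
      · rw [if_pos hi0, hi0, hrd]
      · rw [if_neg hi0]
    -- step 8 : walk right to the marker hole
    have S8 : Seg n (j-1) ⟨.Rw, 1, midT n j (c+1)⟩ ⟨.Rw, (j:ℤ), midT n j (c+1)⟩ := by
      refine Seg.cast rfl (cfg_congr _ (by omega) (fun _ => rfl))
        (walk_right (by decide) (j-1) (by omega) (by omega) ?_)
      intro i hi1 hi2
      by_cases hlt : i < (c:ℤ)+1
      · rw [midT_lo (by omega) hlt,
          tp_dig (by omega) (by push_cast; omega) (by push_cast; omega)]
        cases (j+1).testBit i.toNat <;> rfl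
      · rw [midT_hi (by omega) (by omega),
          tp_dig (by omega) (by omega) (by omega)]
        cases j.testBit i.toNat <;> rfl
    -- step 9 : restore marker, back to examine state
    have S9 : Seg n 1 ⟨.Rw, (j:ℤ), midT n j (c+1)⟩ ⟨.E, (j:ℤ)+1, tp n (j+1)⟩ := by
      refine Seg.cast rfl (cfg_congr _ rfl (hfin ((c:ℤ)+1) (by omega)))
        (segStep (midT_at rfl) rfl (by decide) (by omega) (by omega)
          (by simp only [Dir3.move]; try omega))
    have SS := (((((((S1.trans S2).trans S3).trans S4).trans S5).trans S6).trans
      S7).trans S8).trans S9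
    exact ⟨2*j + 2*c + 1, by omega, Seg.cast (by omega) rfl SS⟩

end UtoB
namespace UtoB

/-- The whole counting phase: from the initial configuration to round `j`. -/
lemma count {n : ℕ} (hn : 2 ≤ n) :
    ∀ j, 2 ≤ j → j ≤ n → ∃ s, s ≤ 5*j*j ∧
      Seg n s ⟨.q0, 0, inT n⟩ ⟨.E, (j:ℤ), tp n j⟩ := by
  have hbase : Seg n 4 ⟨.q0, 0, inT n⟩ ⟨.E, 2, tp n 2⟩ := by
    have hr0 : inT n 0 = (some (), none) := by
      simp only [inT]
      rw [unaryTape_pos le_rfl (by omega)]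
    have B1 : Seg n 1 ⟨.q0, 0, inT n⟩ ⟨.e1, 1, tp n 1⟩ := by
      refine Seg.cast rfl (cfg_congr _ rfl ?_)
        (segStep hr0 rfl (by decide) le_rfl (by omega)
          (by simp only [Dir3.move]; try omega))
      intro i
      rw [Function.update_apply]
      by_cases hi0 : i = 0
      · rw [if_pos hi0, hi0]
        simp only [tp]
        split_ifs <;> first | rfl | (exfalso; omega)
      · rw [if_neg hi0]
        simp only [inT, tp, unaryTape]
        split_ifs <;> first | rfl | (exfalso; omega)
    set t2 := Function.update (tp n 1) 1 ((none, none) : Gam) with ht2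
    have B2 : Seg n 1 ⟨.e1, 1, tp n 1⟩ ⟨.l1, 0, t2⟩ :=
      segStep (tp_mark le_rfl (by omega) (by omega)) rfl (by decide)
        (by omega) (by omega) (by simp only [Dir3.move]; try omega)
    set t3 := Function.update t2 0 ((none, some false) : Gam) with ht3
    have hv2 : t2 0 = (none, some true) := by
      rw [ht2, Function.update_apply, if_neg (by omega), tp_zero (by omega)]
      rfl
    have B3 : Seg n 1 ⟨.l1, 0, t2⟩ ⟨.c1, 1, t3⟩ :=
      segStep hv2 rfl (by decide) le_rfl (by omega)
        (by simp only [Dir3.move]; try omega)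
    have hv3 : t3 1 = (none, none) := by
      rw [ht3, Function.update_apply, if_neg (by omega), ht2,
        Function.update_apply, if_pos rfl]
    have B4 : Seg n 1 ⟨.c1, 1, t3⟩ ⟨.E, 2, tp n 2⟩ := by
      refine Seg.cast rfl (cfg_congr _ rfl ?_)
        (segStep hv3 rfl (by decide) (by omega) (by omega)
          (by simp only [Dir3.move]; try omega))
      intro i
      rw [Function.update_apply]
      by_cases hi1 : i = 1
      · rw [if_pos hi1, hi1]
        simp only [tp]
        split_ifs <;> first | rfl | (exfalso; omega)
      · rw [if_neg hi1, ht3, Function.update_apply]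
        by_cases hi0 : i = 0
        · rw [if_pos hi0, hi0]
          simp only [tp]
          split_ifs <;> first | rfl | (exfalso; omega)
        · rw [if_neg hi0, ht2, Function.update_apply, if_neg (by omega)]
          simp only [tp]
          split_ifs <;> first | rfl | (exfalso; omega)
    exact Seg.cast (by omega) rfl (((B1.trans B2).trans B3).trans B4)
  intro j h2
  induction j, h2 using Nat.le_induction with
  | base =>
    intro _
    exact ⟨4, by omega, hbase⟩
  | succ j hj ih =>
    intro hjn
    obtain ⟨s, hs, hseg⟩ := ih (by omega)
    obtain ⟨s', hs', hseg'⟩ := round (n := n) j hj (by omega)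
    have hcomb := Seg.cast rfl
      (cfg_congr St.E (show ((j:ℤ)+1) = ((j+1:ℕ):ℤ) by push_cast; ring)
        (fun _ => rfl)) (hseg.trans hseg')
    exact ⟨s + s', by nlinarith, hcomb⟩

/-- The cleanup/finishing phase. -/
lemma finish {n : ℕ} (hn : 2 ≤ n) :
    ∃ s, s ≤ 3*n + 4 ∧ Seg n s ⟨.E, (n:ℤ), tp n n⟩ ⟨.qf, 0, outT n⟩ := by
  set L := Nat.log 2 n + 1 with hLdef
  have hlog : Nat.log 2 n < n := Nat.log_lt_self 2 (by omega)
  have hL2 : 2 ≤ L := by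
    have := Nat.log_pos (b := 2) (by norm_num) (by omega : 2 ≤ n)
    omega
  have hLn : L ≤ n := by omega
  have hpowle : 2 ^ Nat.log 2 n ≤ n := Nat.pow_log_le_self 2 (by omega)
  have hltpow : n < 2 ^ L := Nat.lt_pow_succ_log_self (by norm_num) n
  have hmsb : n.testBit (L-1) = true := by
    have hd1 : n / 2 ^ (L-1) = 1 := by
      refine Nat.div_eq_of_lt_le ?_ ?_
      · simpa [hLdef] using hpowle
      · have h2L : 2 ^ L = 2 ^ (L-1) * 2 := by
          conv_lhs => rw [show L = (L-1) + 1 by omega]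
          rw [pow_succ]
        omega
    rw [Nat.testBit_eq_decide_div_mod_eq, hd1]
    rfl
  have hhigh : ∀ i : ℕ, L ≤ i → n.testBit i = false := by
    intro i hi
    exact Nat.testBit_lt_two_pow
      (lt_of_lt_of_le hltpow (Nat.pow_le_pow_right (by norm_num) hi))
  -- canonical cleaned-up tape
  set ft : ℤ → Gam := fun i =>
    if (L:ℤ) ≤ i ∧ i < (n:ℤ) then (some (), none) else tp n n i with hft
  -- step 1 : detect end of input
  have F1 : Seg n 1 ⟨.E, (n:ℤ), tp n n⟩ ⟨.K, (n:ℤ)-1, tp n n⟩ := by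
    refine Seg.cast rfl (cfg_congr _ rfl ?_)
      (segStep (tp_blank (by omega)) rfl (by decide) (by omega) le_rfl
        (by simp only [Dir3.move]; try omega))
    intro i
    rw [Function.update_apply]
    by_cases hi : i = (n:ℤ)
    · rw [if_pos hi, hi, tp_blank (by omega)]
    · rw [if_neg hi]
  -- step 2 : erase the padding zeros
  have F2 : Seg n (n-L) ⟨.K, (n:ℤ)-1, tp n n⟩ ⟨.K, (L:ℤ)-1, ft⟩ := by
    have hsw := sweep_left (n := n) (q := .K)
      (gi := (some (), some false)) (go := (some (), none))
      (by decide) rfl (n-L) (t := tp n n) (b := (n:ℤ)-1)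
      (by omega) (by omega) ?_
    · refine Seg.cast rfl (cfg_congr _ (by omega) ?_) hsw
      intro i
      by_cases hc : (n:ℤ)-1 - ((n-L:ℕ):ℤ) < i ∧ i ≤ (n:ℤ)-1
      · rw [if_pos hc]
        simp only [hft]
        rw [if_pos (show (L:ℤ) ≤ i ∧ i < (n:ℤ) by omega)]
      · rw [if_neg hc]
        simp only [hft]
        rw [if_neg (show ¬((L:ℤ) ≤ i ∧ i < (n:ℤ)) by omega)]
    · intro i hi1 hi2
      rw [tp_dig (by omega) (by omega) le_rfl, hhigh i.toNat (by omega)]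
  -- step 3 : found the most significant bit, turn around
  have F3 : Seg n 1 ⟨.K, (L:ℤ)-1, ft⟩ ⟨.X, (L:ℤ), ft⟩ := by
    have hrd : ft ((L:ℤ)-1) = (some (), some true) := by
      simp only [hft]
      rw [if_neg (by omega), tp_dig (by omega) (by omega) le_rfl,
        show ((L:ℤ)-1).toNat = L-1 from by omega, hmsb]
    refine Seg.cast rfl (cfg_congr _ rfl ?_)
      (segStep hrd rfl (by decide) (by omega) (by omega)
        (by simp only [Dir3.move]; try omega))
    intro i
    rw [Function.update_apply]
    by_cases hi : i = (L:ℤ)-1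
    · rw [if_pos hi, hi, hrd]
    · rw [if_neg hi]
  -- step 4 : walk right over the erased zone
  have F4 : Seg n (n-L) ⟨.X, (L:ℤ), ft⟩ ⟨.X, (n:ℤ), ft⟩ := by
    refine Seg.cast rfl (cfg_congr _ (by omega) (fun _ => rfl))
      (walk_right (by decide) (n-L) (by omega) (by omega) ?_)
    intro i hi1 hi2
    simp only [hft]
    rw [if_pos (show (L:ℤ) ≤ i ∧ i < (n:ℤ) by omega)]
    rfl
  -- step 5 : turn around at the right end
  have F5 : Seg n 1 ⟨.X, (n:ℤ), ft⟩ ⟨.F, (n:ℤ)-1, ft⟩ := by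
    have hrd : ft (n:ℤ) = (none, none) := by
      simp only [hft]
      rw [if_neg (by omega), tp_blank (by omega)]
    refine Seg.cast rfl (cfg_congr _ rfl ?_)
      (segStep hrd rfl (by decide) (by omega) le_rfl
        (by simp only [Dir3.move]; try omega))
    intro i
    rw [Function.update_apply]
    by_cases hi : i = (n:ℤ)
    · rw [if_pos hi, hi, hrd]
    · rw [if_neg hi]
  -- step 6 : walk all the way back to the beacon
  have F6 : Seg n (n-1) ⟨.F, (n:ℤ)-1, ft⟩ ⟨.F, 0, ft⟩ := by
    refine Seg.cast rfl (cfg_congr _ (by omega) (fun _ => rfl))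
      (walk_left (by decide) (n-1) (by omega) (by omega) ?_)
    intro i hi1 hi2
    simp only [hft]
    by_cases hc : (L:ℤ) ≤ i ∧ i < (n:ℤ)
    · rw [if_pos hc]
      rfl
    · rw [if_neg hc, tp_dig (by omega) (by omega) le_rfl]
      cases n.testBit i.toNat <;> rfl
  -- step 7 : restore the beacon and halt
  have hlen : ((Nat.digits 2 n).length : ℤ) = (L:ℤ) := by
    rw [Nat.digits_len 2 n (by norm_num) (by omega)]
  have F7 : Seg n 1 ⟨.F, 0, ft⟩ ⟨.qf, 0, outT n⟩ := by
    have hrd : ft 0 = (none, some (n.testBit 0)) := by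
      simp only [hft]
      rw [if_neg (by omega), tp_zero (by omega)]
    have hd7 : dM .F (none, some (n.testBit 0)) =
        ((some (), some (n.testBit 0)), .qf, .N) := by
      cases n.testBit 0 <;> rfl
    refine Seg.cast rfl (cfg_congr _ rfl ?_)
      (segStep hrd hd7 (by decide) le_rfl (by omega)
        (by simp only [Dir3.move]; try omega))
    intro i
    rw [Function.update_apply]
    simp only [outT, binTape]
    by_cases hi : i = 0
    · rw [if_pos hi, hi, unaryTape_pos le_rfl (by omega),
        if_pos (show 0 ≤ (0:ℤ) ∧ (0:ℤ) < ((Nat.digits 2 n).length:ℤ) by rw [hlen]; omega)]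
      rw [show ((0:ℤ)).toNat = 0 from rfl, digits_beq]
    · rw [if_neg hi]
      simp only [hft]
      by_cases hc : (L:ℤ) ≤ i ∧ i < (n:ℤ)
      · rw [if_pos hc, unaryTape_pos (by omega) (by omega),
          if_neg (show ¬(0 ≤ i ∧ i < ((Nat.digits 2 n).length:ℤ)) by rw [hlen]; omega)]
      · by_cases hin : 1 ≤ i ∧ i < (n:ℤ)
        · rw [if_neg hc, tp_dig (by omega) (by omega) le_rfl,
            unaryTape_pos (by omega) (by omega),
            if_pos (show 0 ≤ i ∧ i < ((Nat.digits 2 n).length:ℤ) by rw [hlen]; omega),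
            digits_beq]
        · rw [if_neg hc, tp_blank (by omega), unaryTape_neg (by omega),
            if_neg (show ¬(0 ≤ i ∧ i < ((Nat.digits 2 n).length:ℤ)) by rw [hlen]; omega)]
  have SS := (((((F1.trans F2).trans F3).trans F4).trans F5).trans F6).trans F7
  exact ⟨2*(n-L) + (n-1) + 4, by omega, Seg.cast (by omega) rfl SS⟩

end UtoB
namespace UtoB

lemma small0 : Seg 0 1 ⟨.q0, 0, inT 0⟩ ⟨.qf, 0, outT 0⟩ := by
  have hr : inT 0 0 = (none, none) := by
    simp only [inT]
    rw [unaryTape_neg (by omega)]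
  refine Seg.cast rfl (cfg_congr _ rfl ?_)
    (segStep hr rfl (by decide) le_rfl (by omega)
      (by simp only [Dir3.move]; try omega))
  intro i
  have hlen0 : ((Nat.digits 2 0).length : ℤ) = 0 := by simp
  have ho : outT 0 i = (none, none) := by
    simp only [outT, binTape]
    rw [unaryTape_neg (by omega),
      if_neg (show ¬(0 ≤ i ∧ i < ((Nat.digits 2 0).length:ℤ)) by
        rw [hlen0]; omega)]
  rw [Function.update_apply, ho]
  by_cases hi : i = 0
  · rw [if_pos hi]
  · rw [if_neg hi]
    simp only [inT]
    rw [unaryTape_neg (by omega)]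

lemma small1 : Seg 1 5 ⟨.q0, 0, inT 1⟩ ⟨.qf, 0, outT 1⟩ := by
  have hlen1 : ((Nat.digits 2 1).length : ℤ) = 1 := by
    rw [Nat.digits_len 2 1 (by norm_num) one_ne_zero, Nat.log_one_right]
    norm_num
  set a1 := Function.update (inT 1) 0 ((none, some true) : Gam) with ha1
  set a2 := Function.update a1 1 ((none, none) : Gam) with ha2
  set a3 := Function.update a2 0 ((none, some true) : Gam) with ha3
  set a4 := Function.update a3 1 ((none, none) : Gam) with ha4
  have hv0 : inT 1 0 = (some (), none) := by
    simp only [inT]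
    rw [unaryTape_pos le_rfl (by norm_num)]
  have A1 : Seg 1 1 ⟨.q0, 0, inT 1⟩ ⟨.e1, 1, a1⟩ :=
    segStep hv0 rfl (by decide) le_rfl (by norm_num)
      (by simp only [Dir3.move]; try omega)
  have hv1 : a1 1 = (none, none) := by
    rw [ha1, Function.update_apply, if_neg (by omega)]
    simp only [inT]
    rw [unaryTape_neg (by omega)]
  have A2 : Seg 1 1 ⟨.e1, 1, a1⟩ ⟨.K1, 0, a2⟩ :=
    segStep hv1 rfl (by decide) (by norm_num) (by norm_num)
      (by simp only [Dir3.move]; try omega)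
  have hv2 : a2 0 = (none, some true) := by
    rw [ha2, Function.update_apply, if_neg (by omega), ha1,
      Function.update_apply, if_pos rfl]
  have A3 : Seg 1 1 ⟨.K1, 0, a2⟩ ⟨.X, 1, a3⟩ :=
    segStep hv2 rfl (by decide) le_rfl (by norm_num)
      (by simp only [Dir3.move]; try omega)
  have hv3 : a3 1 = (none, none) := by
    rw [ha3, Function.update_apply, if_neg (by omega), ha2,
      Function.update_apply, if_pos rfl]
  have A4 : Seg 1 1 ⟨.X, 1, a3⟩ ⟨.F, 0, a4⟩ :=
    segStep hv3 rfl (by decide) (by norm_num) (by norm_num)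
      (by simp only [Dir3.move]; try omega)
  have hv4 : a4 0 = (none, some true) := by
    rw [ha4, Function.update_apply, if_neg (by omega), ha3,
      Function.update_apply, if_pos rfl]
  have A5 : Seg 1 1 ⟨.F, 0, a4⟩ ⟨.qf, 0, outT 1⟩ := by
    refine Seg.cast rfl (cfg_congr _ rfl ?_)
      (segStep hv4 rfl (by decide) le_rfl (by norm_num)
        (by simp only [Dir3.move]; try omega))
    intro i
    rw [Function.update_apply]
    by_cases hi0 : i = 0
    · rw [if_pos hi0, hi0]
      simp only [outT]
      rw [unaryTape_pos le_rfl (by norm_num), binTape,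
        if_pos (show (0:ℤ) ≤ 0 ∧ (0:ℤ) < ((Nat.digits 2 1).length:ℤ) by
          rw [hlen1]; omega),
        show ((0:ℤ)).toNat = 0 from rfl, digits_beq]
      rfl
    · rw [if_neg hi0]
      have ho : outT 1 i = (none, none) := by
        simp only [outT, binTape]
        rw [unaryTape_neg (by omega),
          if_neg (show ¬(0 ≤ i ∧ i < ((Nat.digits 2 1).length:ℤ)) by
            rw [hlen1]; omega)]
      rw [ho]
      simp only [ha4, ha3, ha2, ha1, Function.update_apply, inT, unaryTape]
      split_ifs <;> first | rfl | (exfalso; omega)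
  exact Seg.cast (by omega) rfl ((((A1.trans A2).trans A3).trans A4).trans A5)

end UtoB

/-- **Unary to binary converter** (Lemma `unary_to_binary`).  There is a two-track,
normal form, reversible TM `UtoB` with alphabet `{#,1} × {#,0,1}` which, on input
`1ⁿ;#` (the number `n` in unary on the first track, second track blank), behaves
properly and halts with output `1ⁿ;n` (first track unchanged, `n` in little-endian
binary on the second track); it runs for `O(n² log n)` steps and uses `n + 1` cells. -/
theorem unary_to_binary_machine :
    ∃ (Q : Type) (_ : Fintype Q)
      (UtoB : GTM ((Option Unit) × (Option Bool)) Q) (C : ℕ),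
      UtoB.blank = (none, none) ∧ UtoB.Reversible ∧ UtoB.NormalForm ∧
      ∀ n : ℕ, ∃ t : ℕ,
        t ≤ C * (n + 1) ^ 2 * (Nat.log 2 n + 2) ∧
        UtoB.ProperRun (fun i => (unaryTape n i, none)) t
          (fun i => (unaryTape n i, binTape n i)) ∧
        UtoB.SpaceBound (fun i => (unaryTape n i, none)) t (n + 1) := by
  refine ⟨UtoB.St, inferInstance, UtoB.M, 100, rfl, UtoB.M_rev, UtoB.M_nf, ?_⟩
  intro n
  have key : ∃ t, t ≤ 5*n*n + 3*n + 5 ∧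
      UtoB.Seg n t ⟨.q0, 0, UtoB.inT n⟩ ⟨.qf, 0, UtoB.outT n⟩ := by
    rcases Nat.lt_or_ge n 2 with hn | hn
    · interval_cases n
      · exact ⟨1, by omega, UtoB.small0⟩
      · exact ⟨5, by omega, UtoB.small1⟩
    · obtain ⟨s, hs, hseg⟩ := UtoB.count hn n hn le_rfl
      obtain ⟨s', hs', hseg'⟩ := UtoB.finish hn
      exact ⟨s + s', by omega, hseg.trans hseg'⟩
  obtain ⟨t, htb, hseg⟩ := key
  have hrun : ∀ k, UtoB.M.run (fun i => (unaryTape n i, none)) k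
      = UtoB.M.step^[k] ⟨.q0, 0, UtoB.inT n⟩ := fun k => rfl
  refine ⟨t, ?_, ⟨?_, ?_, ?_, ?_, ?_⟩, ?_⟩
  · have h1 : 2 ≤ Nat.log 2 n + 2 := by omega
    have h2 : t ≤ 200 * (n+1)^2 := by nlinarith
    calc t ≤ 200*(n+1)^2 := h2
      _ = 100*(n+1)^2*2 := by ring
      _ ≤ 100*(n+1)^2*(Nat.log 2 n + 2) := Nat.mul_le_mul_left _ h1
  · rw [hrun t, hseg.1]
    rfl
  · rw [hrun t, hseg.1]
  · rw [hrun t, hseg.1]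
    rfl
  · intro t' ht'
    rw [hrun t']
    exact (hseg.2 t' ht').1
  · intro t' ht'
    rw [hrun t']
    rcases Nat.lt_or_ge t' t with h | h
    · exact (hseg.2 t' h).2.1
    · have heq : t' = t := by omega
      rw [heq, hseg.1]
  · intro t' ht'
    rw [hrun t']
    rcases Nat.lt_or_ge t' t with h | h
    · have := (hseg.2 t' h).2.2
      push_cast
      omega
    · have heq : t' = t := by omega
      rw [heq, hseg.1]
      push_cast
      omega


end
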